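/- Given two countable families {γ_M}_{M∈ℕ} and {σ_M}_{M∈ℕ} of class-K∞ functions, there exist three class-K∞ functions γ̂₂, δ̂₁, δ₂ such that for all T > 0, all M ∈ ℕ with M ≥ 1, and all nonnegative measurable functions φ on [0, T]: γ_M(∫₀^T σ_M(φ(s)) ds) ≤ γ̂₂(M) · δ̂₁(∫₀^T δ₂(φ(s)) ds). -/

import Mathlib

open MeasureTheory

/-- A function of class `K`: continuous, strictly increasing on `[0,∞)`, zero at zero. -/
def ClassK (f : ℝ → ℝ) : Prop :=
  ContinuousOn f (Set.Ici 0) ∧ StrictMonoOn f (Set.Ici 0) ∧ f 0 = 0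

/-- A function of class `K∞`: class `K` and unbounded. -/
def ClassKInf (f : ℝ → ℝ) : Prop :=
  ClassK f ∧ Filter.Tendsto f Filter.atTop Filter.atTop

/-- A function of class `KL`. -/
def ClassKL (β : ℝ → ℝ → ℝ) : Prop :=
  (∀ t, 0 ≤ t → ClassK (fun r => β r t)) ∧
  (∀ r, 0 ≤ r → AntitoneOn (fun t => β r t) (Set.Ici 0) ∧
    Filter.Tendsto (fun t => β r t) Filter.atTop (nhds 0))

open Set Filter

noncomputable section AuxStmt5

/-- ramp weight: 0 for r ≤ M-1, 1 for r ≥ M, linear between. -/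
def rampW (M : ℕ) (r : ℝ) : ℝ := min 1 (max (r - M + 1) 0)

lemma rampW_nonneg (M : ℕ) (r : ℝ) : 0 ≤ rampW M r := by
  unfold rampW; positivity

lemma rampW_le_one (M : ℕ) (r : ℝ) : rampW M r ≤ 1 := min_le_left _ _

lemma rampW_mono (M : ℕ) : Monotone (rampW M) := by
  intro a b hab
  exact min_le_min le_rfl (max_le_max (by linarith) le_rfl)

lemma rampW_cont (M : ℕ) : Continuous (rampW M) := by
  unfold rampW
  exact continuous_const.min ((continuous_id.sub continuous_const).add continuous_const |>.max continuous_const)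

lemma rampW_eq_zero {M : ℕ} {r : ℝ} (h : r + 1 ≤ M) : rampW M r = 0 := by
  unfold rampW
  rw [max_eq_right (by linarith), min_eq_right (by norm_num)]

lemma rampW_eq_one {M : ℕ} {r : ℝ} (h : (M : ℝ) ≤ r) : rampW M r = 1 := by
  unfold rampW
  rw [max_eq_left (by linarith), min_eq_left (by linarith)]

/-- A "nice family": each member monotone, continuous on `[0,∞)`, zero at zero. -/
def NiceFam (f : ℕ → ℝ → ℝ) : Prop :=
  ∀ M, MonotoneOn (f M) (Set.Ici 0) ∧ ContinuousOn (f M) (Set.Ici 0) ∧ f M 0 = 0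

lemma NiceFam.nonneg {f : ℕ → ℝ → ℝ} (hf : NiceFam f) (M : ℕ) {r : ℝ} (hr : 0 ≤ r) :
    0 ≤ f M r := by
  have := (hf M).1 (le_refl (0:ℝ)) hr hr
  rw [(hf M).2.2] at this; exact this

def PhiA (f : ℕ → ℝ → ℝ) (r : ℝ) : ℝ := ∑' M, rampW M r * f M r

def PhiB (f : ℕ → ℝ → ℝ) (r : ℝ) : ℝ :=
  ∑' M, (2:ℝ)⁻¹ ^ M * min (f M r / (f M M + 1)) 1

def Phi (f : ℕ → ℝ → ℝ) (r : ℝ) : ℝ := r + PhiA f r + PhiB f r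

lemma aM_pos {f : ℕ → ℝ → ℝ} (hf : NiceFam f) (M : ℕ) : 0 < f M M + 1 := by
  have := hf.nonneg M (r := (M:ℝ)) (Nat.cast_nonneg M)
  linarith

lemma summA {f : ℕ → ℝ → ℝ} (r : ℝ) :
    Summable (fun M => rampW M r * f M r) := by
  apply summable_of_ne_finset_zero (s := Finset.range (⌈r⌉₊ + 1))
  intro M hM
  rw [Finset.mem_range, not_lt] at hM
  have h1 : r + 1 ≤ M := by
    have h2 : r ≤ (⌈r⌉₊ : ℝ) := by
      rcases le_or_gt 0 r with h | h
      · exact Nat.le_ceil r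
      · exact h.le.trans (Nat.cast_nonneg _)
    have h3 : ((⌈r⌉₊ + 1 : ℕ) : ℝ) ≤ M := by exact_mod_cast hM
    push_cast at h3; linarith
  rw [rampW_eq_zero h1, zero_mul]

lemma minterm_mem {f : ℕ → ℝ → ℝ} (hf : NiceFam f) (M : ℕ) {r : ℝ} (hr : 0 ≤ r) :
    0 ≤ min (f M r / (f M M + 1)) 1 ∧ min (f M r / (f M M + 1)) 1 ≤ 1 := by
  constructor
  · apply le_min _ (by norm_num)
    exact div_nonneg (hf.nonneg M hr) (aM_pos hf M).le
  · exact min_le_right _ _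

lemma summB {f : ℕ → ℝ → ℝ} (hf : NiceFam f) {r : ℝ} (hr : 0 ≤ r) :
    Summable (fun M => (2:ℝ)⁻¹ ^ M * min (f M r / (f M M + 1)) 1) := by
  refine Summable.of_nonneg_of_le
    (fun M => mul_nonneg (by positivity) (minterm_mem hf M hr).1)
    (fun M => ?_)
    (summable_geometric_of_lt_one (r := (2:ℝ)⁻¹) (by norm_num) (by norm_num))
  calc (2:ℝ)⁻¹ ^ M * min (f M r / (f M M + 1)) 1 ≤ (2:ℝ)⁻¹ ^ M * 1 := by
        exact mul_le_mul_of_nonneg_left (minterm_mem hf M hr).2 (by positivity)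
    _ = (2:ℝ)⁻¹ ^ M := mul_one _

lemma PhiA_nonneg {f : ℕ → ℝ → ℝ} (hf : NiceFam f) {r : ℝ} (hr : 0 ≤ r) :
    0 ≤ PhiA f r :=
  tsum_nonneg fun M => mul_nonneg (rampW_nonneg M r) (hf.nonneg M hr)

lemma PhiB_nonneg {f : ℕ → ℝ → ℝ} (hf : NiceFam f) {r : ℝ} (hr : 0 ≤ r) :
    0 ≤ PhiB f r :=
  tsum_nonneg fun M => mul_nonneg (by positivity) (minterm_mem hf M hr).1

lemma Phi_nonneg {f : ℕ → ℝ → ℝ} (hf : NiceFam f) {r : ℝ} (hr : 0 ≤ r) :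
    0 ≤ Phi f r := by
  have := PhiA_nonneg hf hr; have := PhiB_nonneg hf hr
  unfold Phi; linarith

lemma le_Phi_of_ge {f : ℕ → ℝ → ℝ} (hf : NiceFam f) {M : ℕ} {r : ℝ}
    (h : (M : ℝ) ≤ r) : f M r ≤ Phi f r := by
  have hr : 0 ≤ r := le_trans (Nat.cast_nonneg M) h
  have h1 : rampW M r * f M r ≤ PhiA f r :=
    Summable.le_tsum (summA r) M fun i _ => mul_nonneg (rampW_nonneg i r) (hf.nonneg i hr)
  rw [rampW_eq_one h, one_mul] at h1
  have := PhiB_nonneg hf hr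
  unfold Phi; linarith

lemma le_coef_mul_Phi {f : ℕ → ℝ → ℝ} (hf : NiceFam f) (M : ℕ) {r : ℝ} (hr : 0 ≤ r) :
    f M r ≤ max 1 ((2:ℝ) ^ M * (f M M + 1)) * Phi f r := by
  have hPhi := Phi_nonneg hf hr
  rcases le_or_gt (M : ℝ) r with h | h
  · calc f M r ≤ Phi f r := le_Phi_of_ge hf h
      _ = 1 * Phi f r := (one_mul _).symm
      _ ≤ max 1 ((2:ℝ) ^ M * (f M M + 1)) * Phi f r :=
        mul_le_mul_of_nonneg_right (le_max_left _ _) hPhi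
  · -- r < M : use the B part
    have ha := aM_pos hf M
    have hfr : f M r ≤ f M M := (hf M).1 hr (Set.mem_Ici.mpr (Nat.cast_nonneg M)) h.le
    have hmin : min (f M r / (f M M + 1)) 1 = f M r / (f M M + 1) := by
      apply min_eq_left
      rw [div_le_one ha]; linarith
    have h1 : (2:ℝ)⁻¹ ^ M * min (f M r / (f M M + 1)) 1 ≤ PhiB f r :=
      Summable.le_tsum (summB hf hr) M fun i _ =>
        mul_nonneg (by positivity) (minterm_mem hf i hr).1
    rw [hmin] at h1
    have h2 : (2:ℝ)⁻¹ ^ M * (f M r / (f M M + 1)) ≤ Phi f r := by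
      have := PhiA_nonneg hf hr; unfold Phi; linarith
    have h3 : f M r ≤ (2:ℝ) ^ M * (f M M + 1) * Phi f r := by
      have hcoef : (0:ℝ) ≤ (2:ℝ) ^ M * (f M M + 1) := by positivity
      have key : f M r = (2:ℝ) ^ M * (f M M + 1) * ((2:ℝ)⁻¹ ^ M * (f M r / (f M M + 1))) := by
        rw [inv_pow]
        field_simp
      calc f M r = (2:ℝ) ^ M * (f M M + 1) * ((2:ℝ)⁻¹ ^ M * (f M r / (f M M + 1))) := key
        _ ≤ (2:ℝ) ^ M * (f M M + 1) * Phi f r := mul_le_mul_of_nonneg_left h2 hcoef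
    calc f M r ≤ (2:ℝ) ^ M * (f M M + 1) * Phi f r := h3
      _ ≤ max 1 ((2:ℝ) ^ M * (f M M + 1)) * Phi f r :=
        mul_le_mul_of_nonneg_right (le_max_right _ _) hPhi

lemma Phi_zero {f : ℕ → ℝ → ℝ} (hf : NiceFam f) : Phi f 0 = 0 := by
  have hA : PhiA f 0 = 0 := by
    unfold PhiA
    convert tsum_zero with M
    rcases Nat.eq_zero_or_pos M with h | h
    · subst h; rw [(hf 0).2.2, mul_zero]
    · rw [rampW_eq_zero (by exact_mod_cast h), zero_mul]
  have hB : PhiB f 0 = 0 := by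
    unfold PhiB
    convert tsum_zero with M
    rw [(hf M).2.2, zero_div, min_eq_left (by norm_num), mul_zero]
  unfold Phi; rw [hA, hB]; ring

lemma Phi_strictMono {f : ℕ → ℝ → ℝ} (hf : NiceFam f) :
    StrictMonoOn (Phi f) (Set.Ici 0) := by
  intro a ha b hb hab
  have ha' : (0:ℝ) ≤ a := ha
  have hb' : (0:ℝ) ≤ b := hb
  have hA : PhiA f a ≤ PhiA f b := by
    apply Summable.tsum_le_tsum _ (summA a) (summA b)
    intro M
    exact mul_le_mul (rampW_mono M hab.le) ((hf M).1 ha' hb' hab.le)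
      (hf.nonneg M ha') (rampW_nonneg M b)
  have hB : PhiB f a ≤ PhiB f b := by
    apply Summable.tsum_le_tsum _ (summB hf ha') (summB hf hb')
    intro M
    apply mul_le_mul_of_nonneg_left _ (by positivity)
    apply min_le_min _ le_rfl
    exact (div_le_div_iff_of_pos_right (aM_pos hf M)).mpr ((hf M).1 ha' hb' hab.le)
  unfold Phi; linarith

lemma Phi_contOn {f : ℕ → ℝ → ℝ} (hf : NiceFam f) :
    ContinuousOn (Phi f) (Set.Ici 0) := by
  intro x hx
  have hx' : (0:ℝ) ≤ x := hx
  set R : ℝ := x + 1 with hR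
  have hcontIcc : ContinuousOn (Phi f) (Set.Icc 0 R) := by
    have hA : ContinuousOn (PhiA f) (Set.Icc 0 R) := by
      apply continuousOn_tsum (u := fun M => if M ≤ ⌈R⌉₊ then f M R else 0)
      · intro M
        exact ((rampW_cont M).continuousOn).mul ((hf M).2.1.mono (fun y hy => hy.1))
      · apply summable_of_ne_finset_zero (s := Finset.range (⌈R⌉₊ + 1))
        intro M hM
        rw [Finset.mem_range, not_lt] at hM
        rw [if_neg (by omega)]
      · intro M y hy
        rcases le_or_gt M ⌈R⌉₊ with h | h
        · rw [if_pos h, Real.norm_eq_abs, abs_of_nonneg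
            (mul_nonneg (rampW_nonneg M y) (hf.nonneg M hy.1))]
          calc rampW M y * f M y ≤ 1 * f M y :=
              mul_le_mul_of_nonneg_right (rampW_le_one M y) (hf.nonneg M hy.1)
            _ = f M y := one_mul _
            _ ≤ f M R := (hf M).1 hy.1 (by linarith [hy.1, hy.2] : (0:ℝ) ≤ R) hy.2
        · rw [if_neg (by omega)]
          have hMR : R + 1 ≤ M := by
            have : (⌈R⌉₊ : ℝ) < M := by exact_mod_cast h
            have : R ≤ (⌈R⌉₊:ℝ) := Nat.le_ceil R
            have hM1 : (⌈R⌉₊:ℝ) + 1 ≤ M := by exact_mod_cast h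
            linarith
          rw [rampW_eq_zero (by linarith [hy.2] : y + 1 ≤ M), zero_mul, norm_zero]
    have hB : ContinuousOn (PhiB f) (Set.Icc 0 R) := by
      apply continuousOn_tsum (u := fun M => (2:ℝ)⁻¹ ^ M)
      · intro M
        apply continuousOn_const.mul
        exact (((hf M).2.1.mono (fun y hy => hy.1)).div_const _).inf continuousOn_const
      · exact summable_geometric_of_lt_one (by norm_num) (by norm_num)
      · intro M y hy
        rw [Real.norm_eq_abs, abs_of_nonneg
          (mul_nonneg (by positivity) (minterm_mem hf M hy.1).1)]
        calc (2:ℝ)⁻¹ ^ M * min (f M y / (f M M + 1)) 1 ≤ (2:ℝ)⁻¹ ^ M * 1 :=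
            mul_le_mul_of_nonneg_left (minterm_mem hf M hy.1).2 (by positivity)
          _ = (2:ℝ)⁻¹ ^ M := mul_one _
    exact (continuousOn_id.add hA).add hB
  have hmem : Set.Icc 0 R ∈ nhdsWithin x (Set.Ici 0) := by
    apply Filter.mem_of_superset (inter_mem_nhdsWithin _ (Iio_mem_nhds (by linarith : x < R)))
    rintro y ⟨hy1, hy2⟩
    exact ⟨hy1, le_of_lt hy2⟩
  exact (hcontIcc x ⟨hx', by linarith⟩).mono_of_mem_nhdsWithin hmem

lemma Phi_tendsto {f : ℕ → ℝ → ℝ} (hf : NiceFam f) :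
    Filter.Tendsto (Phi f) Filter.atTop Filter.atTop := by
  apply tendsto_atTop_mono' _ _ tendsto_id
  filter_upwards [Filter.eventually_ge_atTop (0:ℝ)] with r hr
  have := PhiA_nonneg hf hr; have := PhiB_nonneg hf hr
  unfold Phi; simp only [id]; linarith

lemma Phi_classKInf {f : ℕ → ℝ → ℝ} (hf : NiceFam f) : ClassKInf (Phi f) :=
  ⟨⟨Phi_contOn hf, Phi_strictMono hf, Phi_zero hf⟩, Phi_tendsto hf⟩

end AuxStmt5

lemma intervalIntegrable_comp_aux {g : ℝ → ℝ} (hg : MonotoneOn g (Set.Ici 0))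
    (hgc : ContinuousOn g (Set.Ici 0)) (hg0 : g 0 = 0)
    {φ : ℝ → ℝ} (hφ : Measurable φ) (hφ0 : ∀ s, 0 ≤ φ s) {T C : ℝ} (hT : 0 ≤ T)
    (hC : ∀ s ∈ Set.Icc 0 T, φ s ≤ C) :
    IntervalIntegrable (fun s => g (φ s)) volume 0 T := by
  set C' := max C 0 with hC'
  have hmeasG : Measurable (fun x : ℝ => g (max x 0)) := by
    have : Continuous (fun x : ℝ => g (max x 0)) :=
      hgc.comp_continuous (continuous_id.max continuous_const) (fun x => Set.mem_Ici.mpr (le_max_right _ _))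
    exact this.measurable
  have hmeas : Measurable (fun s => g (φ s)) := by
    have heq : (fun s => g (φ s)) = (fun x => g (max x 0)) ∘ φ := by
      funext s; simp [Function.comp, max_eq_left (hφ0 s)]
    rw [heq]; exact hmeasG.comp hφ
  rw [intervalIntegrable_iff_integrableOn_Ioc_of_le hT]
  refine Integrable.mono' (integrable_const (g C')) hmeas.aestronglyMeasurable.restrict ?_
  rw [ae_restrict_iff' measurableSet_Ioc]
  refine ae_of_all _ fun s hs => ?_
  have h1 : 0 ≤ g (φ s) := by
    have := hg (Set.mem_Ici.mpr le_rfl) (Set.mem_Ici.mpr (hφ0 s)) (hφ0 s)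
    rwa [hg0] at this
  have h2 : g (φ s) ≤ g C' := by
    refine hg (Set.mem_Ici.mpr (hφ0 s)) (Set.mem_Ici.mpr (le_max_right _ _)) ?_
    exact le_trans (hC s (Set.Ioc_subset_Icc_self hs)) (le_max_left _ _)
  rw [Real.norm_eq_abs, abs_of_nonneg h1]; exact h2

/-- Given two countable families of class-K∞ functions, there are class-K∞ functions
γ̂₂, δ̂₁, δ₂ such that for all T > 0, integers M ≥ 1, and nonnegative bounded measurable φ:
γ_M(∫₀^T σ_M(φ(s)) ds) ≤ γ̂₂(M)·δ̂₁(∫₀^T δ₂(φ(s)) ds). -/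
theorem stmt5 (γ σ : ℕ → ℝ → ℝ)
    (hγ : ∀ M : ℕ, ClassKInf (γ M)) (hσ : ∀ M : ℕ, ClassKInf (σ M)) :
    ∃ γhat₂ δhat₁ δ₂ : ℝ → ℝ, ClassKInf γhat₂ ∧ ClassKInf δhat₁ ∧ ClassKInf δ₂ ∧
      ∀ T : ℝ, 0 < T → ∀ M : ℕ, 1 ≤ M → ∀ φ : ℝ → ℝ,
        Measurable φ → (∀ s, 0 ≤ φ s) → (∃ C : ℝ, ∀ s ∈ Set.Icc 0 T, φ s ≤ C) →
        γ M (∫ s in (0:ℝ)..T, σ M (φ s)) ≤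
          γhat₂ (M : ℝ) * δhat₁ (∫ s in (0:ℝ)..T, δ₂ (φ s)) := by
  have hσfam : NiceFam σ := fun M =>
    ⟨((hσ M).1.2.1).monotoneOn, (hσ M).1.1, (hσ M).1.2.2⟩
  set c : ℕ → ℝ := fun M => max 1 ((2:ℝ) ^ M * (σ M M + 1)) with hcdef
  have hc1 : ∀ M, 1 ≤ c M := fun M => le_max_left _ _
  have hc0 : ∀ M, 0 < c M := fun M => lt_of_lt_of_le zero_lt_one (hc1 M)
  set f2 : ℕ → ℝ → ℝ := fun M r => γ M (c M * r) with hf2def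
  have hf2fam : NiceFam f2 := by
    intro M
    refine ⟨?_, ?_, ?_⟩
    · intro a ha b hb hab
      exact ((hγ M).1.2.1).monotoneOn
        (Set.mem_Ici.mpr (mul_nonneg (hc0 M).le ha))
        (Set.mem_Ici.mpr (mul_nonneg (hc0 M).le hb))
        (mul_le_mul_of_nonneg_left hab (hc0 M).le)
    · exact ContinuousOn.comp (hγ M).1.1
        (continuous_const.mul continuous_id).continuousOn
        (fun x hx => Set.mem_Ici.mpr (mul_nonneg (hc0 M).le hx))
    · show γ M (c M * 0) = 0
      rw [mul_zero, (hγ M).1.2.2]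
  set e : ℕ → ℝ := fun M => max 1 ((2:ℝ) ^ M * (f2 M M + 1)) with hedef
  have he1 : ∀ M, 1 ≤ e M := fun M => le_max_left _ _
  set f3 : ℕ → ℝ → ℝ := fun M r => (if M = 0 then 0 else e M) * rampW M r with hf3def
  have hf3coef : ∀ M, 0 ≤ (if M = 0 then 0 else e M) := by
    intro M; split
    · exact le_rfl
    · linarith [he1 M]
  have hf3fam : NiceFam f3 := by
    intro M
    refine ⟨?_, ?_, ?_⟩
    · intro a _ b _ hab
      exact mul_le_mul_of_nonneg_left (rampW_mono M hab) (hf3coef M)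
    · exact (continuous_const.mul (rampW_cont M)).continuousOn
    · rcases Nat.eq_zero_or_pos M with h | h
      · simp [hf3def, h]
      · simp only [hf3def]
        rw [rampW_eq_zero (by exact_mod_cast h), mul_zero]
  refine ⟨Phi f3, Phi f2, Phi σ, Phi_classKInf hf3fam, Phi_classKInf hf2fam,
    Phi_classKInf hσfam, ?_⟩
  rintro T hT M hM φ hφ hφ0 ⟨C, hC⟩
  have int1 : IntervalIntegrable (fun s => σ M (φ s)) volume 0 T :=
    intervalIntegrable_comp_aux (hσfam M).1 (hσfam M).2.1 (hσfam M).2.2 hφ hφ0 hT.le hC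
  have int2 : IntervalIntegrable (fun s => Phi σ (φ s)) volume 0 T :=
    intervalIntegrable_comp_aux (Phi_strictMono hσfam).monotoneOn (Phi_contOn hσfam)
      (Phi_zero hσfam) hφ hφ0 hT.le hC
  set I := ∫ s in (0:ℝ)..T, σ M (φ s) with hI
  set J := ∫ s in (0:ℝ)..T, Phi σ (φ s) with hJ
  have hJ0 : 0 ≤ J :=
    intervalIntegral.integral_nonneg hT.le (fun s _ => Phi_nonneg hσfam (hφ0 s))
  have hI0 : 0 ≤ I :=
    intervalIntegral.integral_nonneg hT.le (fun s _ => hσfam.nonneg M (hφ0 s))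
  have step1 : I ≤ c M * J := by
    have h := intervalIntegral.integral_mono_on hT.le int1 (int2.const_mul (c M))
      (fun x _ => le_coef_mul_Phi hσfam M (hφ0 x))
    rwa [intervalIntegral.integral_const_mul] at h
  have step2 : γ M I ≤ γ M (c M * J) :=
    ((hγ M).1.2.1).monotoneOn (Set.mem_Ici.mpr hI0)
      (Set.mem_Ici.mpr (mul_nonneg (hc0 M).le hJ0)) step1
  have step3 : γ M (c M * J) ≤ e M * Phi f2 J := le_coef_mul_Phi hf2fam M hJ0
  have step4 : e M ≤ Phi f3 (M : ℝ) := by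
    have h := le_Phi_of_ge hf3fam (M := M) (r := (M : ℝ)) le_rfl
    rw [hf3def] at h
    simp only at h
    rwa [if_neg (by omega), rampW_eq_one le_rfl, mul_one] at h
  have step5 : e M * Phi f2 J ≤ Phi f3 (M : ℝ) * Phi f2 J :=
    mul_le_mul_of_nonneg_right step4 (Phi_nonneg hf2fam hJ0)
  calc γ M I ≤ γ M (c M * J) := step2
    _ ≤ e M * Phi f2 J := step3
    _ ≤ Phi f3 (M : ℝ) * Phi f2 J := step5
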